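/- Let U ⊆ ℝⁿ be open, f : U → ℝ^{n+1} continuously differentiable, and ν : U → (ℝ^{n+1})* twice continuously differentiable, and assume the Lagrangian condition (Dν(x)(X))(Df(x)(Y)) = (Dν(x)(Y))(Df(x)(X)) for all x ∈ U and X, Y ∈ ℝⁿ. Define the 1-form α : U → (ℝⁿ)* by α(x)(X) := (Dν(x)(X))(f(x)). Then α is closed: its Fréchet derivative is symmetric, i.e. (Dα(x)(X))(Y) = (Dα(x)(Y))(X) for all x ∈ U and X, Y ∈ ℝⁿ. -/

import Mathlib

/-- The 1-form `α(x)(X) = (Dν(x)(X))(f(x))`, packaged as a continuous linear functional. -/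
noncomputable def alphaForm (n : ℕ)
    (f : (Fin n → ℝ) → (Fin (n + 1) → ℝ))
    (ν : (Fin n → ℝ) → (Fin (n + 1) → ℝ) →L[ℝ] ℝ)
    (x : Fin n → ℝ) : (Fin n → ℝ) →L[ℝ] ℝ :=
  (ContinuousLinearMap.apply ℝ ℝ (f x)).comp (fderiv ℝ ν x)

/-- If `f` is `C¹`, `ν` is `C²`, and the Lagrangian condition holds, then
the 1-form `α(x)(X) = (Dν(x)(X))(f(x))` is closed: its Fréchet derivative is symmetric. -/
theorem stmt_4 (n : ℕ) (hn : 1 ≤ n) (U : Set (Fin n → ℝ)) (hU : IsOpen U)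
    (f : (Fin n → ℝ) → (Fin (n + 1) → ℝ))
    (ν : (Fin n → ℝ) → (Fin (n + 1) → ℝ) →L[ℝ] ℝ)
    (hf : ContDiffOn ℝ 1 f U) (hν : ContDiffOn ℝ 2 ν U)
    (hLag : ∀ x ∈ U, ∀ X Y : Fin n → ℝ,
      (fderiv ℝ ν x X) (fderiv ℝ f x Y) = (fderiv ℝ ν x Y) (fderiv ℝ f x X)) :
    ∀ x ∈ U, ∀ X Y : Fin n → ℝ,
      (fderiv ℝ (alphaForm n f ν) x X) Y = (fderiv ℝ (alphaForm n f ν) x Y) X := by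
  intro x hx X Y
  have hxU : U ∈ nhds x := hU.mem_nhds hx
  have hν2 : ContDiffAt ℝ 2 ν x := hν.contDiffAt hxU
  have hf1 : ContDiffAt ℝ 1 f x := hf.contDiffAt hxU
  have hfd : DifferentiableAt ℝ f x := hf1.differentiableAt one_ne_zero
  have hg1 : ContDiffAt ℝ 1 (fderiv ℝ ν) x := hν2.fderiv_right (by norm_num)
  have hgd : DifferentiableAt ℝ (fderiv ℝ ν) x := hg1.differentiableAt one_ne_zero
  have hsymm : IsSymmSndFDerivAt ℝ ν x := hν2.isSymmSndFDerivAt (by simp)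
  -- derivative of y ↦ apply (f y)
  have hc : HasFDerivAt (fun y => ContinuousLinearMap.apply ℝ ℝ (f y))
      ((ContinuousLinearMap.apply ℝ ℝ :
          (Fin (n + 1) → ℝ) →L[ℝ] (((Fin (n + 1) → ℝ) →L[ℝ] ℝ) →L[ℝ] ℝ)).comp
        (fderiv ℝ f x)) x := by
    have h : HasFDerivAt (ContinuousLinearMap.apply ℝ ℝ :
        (Fin (n + 1) → ℝ) →L[ℝ] (((Fin (n + 1) → ℝ) →L[ℝ] ℝ) →L[ℝ] ℝ))
        (ContinuousLinearMap.apply ℝ ℝ) (f x) := ContinuousLinearMap.hasFDerivAt _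
    exact HasFDerivAt.comp (g := ⇑(ContinuousLinearMap.apply ℝ ℝ :
        (Fin (n + 1) → ℝ) →L[ℝ] (((Fin (n + 1) → ℝ) →L[ℝ] ℝ) →L[ℝ] ℝ))) x h hfd.hasFDerivAt
  have hd : HasFDerivAt (fderiv ℝ ν) (fderiv ℝ (fderiv ℝ ν) x) x := hgd.hasFDerivAt
  have hα : HasFDerivAt (alphaForm n f ν)
      ((ContinuousLinearMap.compL ℝ (Fin n → ℝ) ((Fin (n + 1) → ℝ) →L[ℝ] ℝ) ℝ
          (ContinuousLinearMap.apply ℝ ℝ (f x))).comp (fderiv ℝ (fderiv ℝ ν) x) +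
        ((ContinuousLinearMap.compL ℝ (Fin n → ℝ) ((Fin (n + 1) → ℝ) →L[ℝ] ℝ) ℝ).flip
          (fderiv ℝ ν x)).comp
          ((ContinuousLinearMap.apply ℝ ℝ :
            (Fin (n + 1) → ℝ) →L[ℝ] (((Fin (n + 1) → ℝ) →L[ℝ] ℝ) →L[ℝ] ℝ)).comp
            (fderiv ℝ f x))) x := hc.clm_comp hd
  rw [hα.fderiv]
  simp only [ContinuousLinearMap.add_apply, ContinuousLinearMap.comp_apply,
    ContinuousLinearMap.compL_apply, ContinuousLinearMap.flip_apply,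
    ContinuousLinearMap.apply_apply]
  rw [hsymm X Y, hLag x hx X Y]
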